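/- Let f be a harmonic (K,K')-quasiconformal mapping of the unit disk, f(z) = Σ_{n≥0} a_n zⁿ + Σ_{n≥1} b̄_n z̄ⁿ, with finite radial length ℓ*_f(1) = sup_{θ∈[0,2π]} sup_{0≤r<1} ∫₀^r |f_z(ρe^{iθ}) + e^{−2iθ} f_{z̄}(ρe^{iθ})| dρ < ∞. Then for every n ≥ 1, |a_n| + |b_n| ≤ √K' + K ℓ*_f(1). -/

import Mathlib

open Complex Metric Set

/-- Wirtinger derivative f_z = (f_x − i f_y)/2. -/
noncomputable def wdz (f : ℂ → ℂ) (z : ℂ) : ℂ :=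
  (fderiv ℝ f z 1 - Complex.I * fderiv ℝ f z Complex.I) / 2

/-- Wirtinger derivative f_{z̄} = (f_x + i f_y)/2. -/
noncomputable def wdzbar (f : ℂ → ℂ) (z : ℂ) : ℂ :=
  (fderiv ℝ f z 1 + Complex.I * fderiv ℝ f z Complex.I) / 2

open Complex Metric Set

lemma phase_exists (A B : ℂ) : ∃ φ : ℝ, A + B * Complex.exp (φ * I) =
    ((‖A‖ + ‖B‖) : ℝ) * Complex.exp (A.arg * I) := by
  refine ⟨A.arg - B.arg, ?_⟩
  set φ := A.arg - B.arg with hφ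
  have hB : B * Complex.exp (φ * I) = (‖B‖ : ℂ) * Complex.exp (A.arg * I) := by
    calc B * Complex.exp (φ * I)
        = ((‖B‖ : ℂ) * Complex.exp (B.arg * I)) * Complex.exp (φ * I) := by
          rw [Complex.norm_mul_exp_arg_mul_I]
      _ = (‖B‖ : ℂ) * Complex.exp (A.arg * I) := by
          rw [mul_assoc, ← Complex.exp_add]
          congr 1
          rw [hφ]; push_cast; ring
  rw [hB]
  nth_rewrite 1 [← Complex.norm_mul_exp_arg_mul_I A]
  push_cast; ring

/-- The term of the series, written in separated form. -/
lemma term_eq (a b : ℕ → ℂ) (s θ : ℝ) (n : ℕ) :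
    a n * ((s:ℂ) * Complex.exp (θ * I)) ^ n
      + (starRingEnd ℂ) (b n) * ((starRingEnd ℂ) ((s:ℂ) * Complex.exp (θ * I))) ^ n
    = Complex.exp ((n * θ : ℝ) * I) *
        (a n * (s:ℂ)^n + ((starRingEnd ℂ) (b n) * (s:ℂ)^n) * Complex.exp ((-(2 * n * θ) : ℝ) * I)) := by
  have hconj : (starRingEnd ℂ) ((s:ℂ) * Complex.exp (θ * I))
      = (s:ℂ) * Complex.exp ((-θ : ℝ) * I) := by
    rw [map_mul, Complex.conj_ofReal, ← Complex.exp_conj]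
    congr 1
    simp [Complex.ext_iff]
  rw [hconj, mul_pow, mul_pow, ← Complex.exp_nat_mul, ← Complex.exp_nat_mul,
    show ((n:ℂ) * ((-θ:ℝ)*I)) = ((n*θ:ℝ)*I) + ((-(2*n*θ):ℝ)*I) by push_cast; ring,
    Complex.exp_add, show ((n:ℂ) * ((θ:ℝ)*I)) = ((n*θ:ℝ)*I) by push_cast; ring]
  ring

lemma coeff_bound_of_bddterms (a b : ℕ → ℂ) (s : ℝ) (hs0 : 0 < s) (hs1 : s < 1)
    (hbdd : ∀ θ : ℝ, ∃ M : ℝ, ∀ n : ℕ,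
      ‖a n * ((s:ℂ) * Complex.exp (θ * I)) ^ n
        + (starRingEnd ℂ) (b n) * ((starRingEnd ℂ) ((s:ℂ) * Complex.exp (θ * I))) ^ n‖ ≤ M) :
    ∃ C : ℝ, ∀ n : ℕ, (‖a n‖ + ‖b n‖) * s ^ n ≤ C := by
  set t : ℕ → ℝ → ℂ := fun n θ => a n * ((s:ℂ) * Complex.exp (θ * I)) ^ n
        + (starRingEnd ℂ) (b n) * ((starRingEnd ℂ) ((s:ℂ) * Complex.exp (θ * I))) ^ n with ht
  have hcont : ∀ n, Continuous (fun θ => ‖t n θ‖) := by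
    intro n
    have hz : Continuous (fun θ : ℝ => (s:ℂ) * Complex.exp (θ * I)) :=
      continuous_const.mul (Complex.continuous_exp.comp
        (Complex.continuous_ofReal.mul continuous_const))
    exact continuous_norm.comp
      ((continuous_const.mul (hz.pow n)).add
        (continuous_const.mul ((Complex.continuous_conj.comp hz).pow n)))
  set E : ℕ → Set ℝ := fun m => ⋂ n, {θ : ℝ | ‖t n θ‖ ≤ m} with hE
  have hclosed : ∀ m, IsClosed (E m) :=
    fun m => isClosed_iInter fun n => isClosed_le (hcont n) continuous_const
  have hcover : ⋃ m, E m = Set.univ := by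
    rw [Set.eq_univ_iff_forall]
    intro θ
    obtain ⟨M, hM⟩ := hbdd θ
    refine Set.mem_iUnion.2 ⟨⌈max M 0⌉₊, Set.mem_iInter.2 fun n => ?_⟩
    exact le_trans (hM n) (le_trans (le_max_left _ _) (Nat.le_ceil _))
  obtain ⟨m, θ₀, hθ₀⟩ := nonempty_interior_of_iUnion_of_closed hclosed hcover
  obtain ⟨ε, hε, hball⟩ := Metric.isOpen_iff.mp isOpen_interior θ₀ hθ₀
  have hballE : Metric.ball θ₀ ε ⊆ E m := hball.trans interior_subset
  have key : ∀ n : ℕ, 2 * Real.pi / ε ≤ n →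
      (‖a n‖ + ‖b n‖) * s ^ n ≤ m := by
    intro n hn
    have hπ : 0 < Real.pi := Real.pi_pos
    have hn0 : 0 < (n:ℝ) := lt_of_lt_of_le (by positivity) hn
    obtain ⟨φ, hφ⟩ := phase_exists (a n * (s:ℂ)^n) ((starRingEnd ℂ) (b n) * (s:ℂ)^n)
    set k : ℤ := ⌊(-φ - 2*n*θ₀) / (2*Real.pi)⌋ with hk
    set θ : ℝ := (-φ - 2*Real.pi*k) / (2*n) with hθdef
    have hfloor := Int.floor_le ((-φ - 2*n*θ₀) / (2*Real.pi))
    have hfloor' := Int.lt_floor_add_one ((-φ - 2*n*θ₀) / (2*Real.pi))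
    have h2π : (0:ℝ) < 2*Real.pi := by positivity
    have hf1 : (k:ℝ) * (2*Real.pi) ≤ -φ - 2*n*θ₀ := (le_div_iff₀ h2π).mp hfloor
    have hf2 : -φ - 2*(n:ℝ)*θ₀ < ((k:ℝ) + 1) * (2*Real.pi) := (div_lt_iff₀ h2π).mp hfloor'
    have hθlo : 0 ≤ θ - θ₀ := by
      rw [sub_nonneg, hθdef, le_div_iff₀ (by positivity : (0:ℝ) < 2*n)]
      nlinarith
    have hθhi : θ - θ₀ < Real.pi / n := by
      have hc : Real.pi / n * (2*n) = 2*Real.pi := by field_simp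
      rw [sub_lt_iff_lt_add, hθdef, div_lt_iff₀ (by positivity : (0:ℝ) < 2*n)]
      nlinarith
    have hmem : θ ∈ Metric.ball θ₀ ε := by
      rw [Metric.mem_ball, Real.dist_eq, abs_sub_lt_iff]
      have hπn : Real.pi / n ≤ ε / 2 := by
        rw [div_le_div_iff₀ hn0 (by norm_num : (0:ℝ) < 2)]
        rw [div_le_iff₀ hε] at hn
        nlinarith
      constructor <;> nlinarith
    have hEm := Set.mem_iInter.1 (hballE hmem) n
    have hexp : Complex.exp ((-(2 * n * θ) : ℝ) * I) = Complex.exp ((φ:ℝ) * I) := by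
      have harg : (-(2 * n * θ) : ℝ) = φ + k * (2*Real.pi) := by
        rw [hθdef]; field_simp; ring
      rw [harg]
      push_cast
      rw [add_mul, Complex.exp_add, mul_assoc, Complex.exp_int_mul_two_pi_mul_I, mul_one]
    have hteq : ‖t n θ‖
        = (‖a n * (s:ℂ)^n‖ + ‖(starRingEnd ℂ) (b n) * (s:ℂ)^n‖) := by
      rw [ht]
      simp only []
      rw [term_eq, hexp, hφ, norm_mul, norm_mul, Complex.norm_exp_ofReal_mul_I,
        Complex.norm_exp_ofReal_mul_I, one_mul, mul_one, Complex.norm_real, Real.norm_eq_abs]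
      exact abs_of_nonneg (by positivity)
    have habs : ‖a n * (s:ℂ)^n‖ + ‖(starRingEnd ℂ) (b n) * (s:ℂ)^n‖
        = (‖a n‖ + ‖b n‖) * s ^ n := by
      rw [norm_mul, norm_mul, norm_pow, Complex.norm_conj, Complex.norm_real, Real.norm_eq_abs, abs_of_pos hs0]
      ring
    rw [← habs, ← hteq]
    exact hEm
  set N : ℕ := ⌈2 * Real.pi / ε⌉₊ with hN
  refine ⟨(m:ℝ) + ∑ j ∈ Finset.range (N+1), (‖a j‖ + ‖b j‖) * s ^ j,
    fun n => ?_⟩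
  have hsum0 : 0 ≤ ∑ j ∈ Finset.range (N+1), (‖a j‖ + ‖b j‖) * s ^ j :=
    Finset.sum_nonneg fun j _ => by positivity
  by_cases hcase : n ≤ N
  · have := Finset.single_le_sum
      (f := fun j => (‖a j‖ + ‖b j‖) * s ^ j)
      (fun j _ => by positivity) (Finset.mem_range.2 (Nat.lt_succ_of_le hcase))
    simp only [Nat.succ_eq_add_one] at this
    have hm0 : (0:ℝ) ≤ m := Nat.cast_nonneg m
    linarith
  · push_neg at hcase
    have : 2 * Real.pi / ε ≤ n := le_trans (Nat.le_ceil _) (by exact_mod_cast hcase.le)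
    linarith [key n this]

open FormalMultilinearSeries in
lemma series_setup (a b : ℕ → ℂ) (f : ℂ → ℂ)
    (hrep : ∀ z ∈ Metric.ball (0:ℂ) 1,
      HasSum (fun n : ℕ => a n * z ^ n + (starRingEnd ℂ) (b n) * ((starRingEnd ℂ) z) ^ n) (f z)) :
    HasFPowerSeriesOnBall (ofScalars ℂ a).sum (ofScalars ℂ a) 0 1 ∧
    HasFPowerSeriesOnBall (ofScalars ℂ b).sum (ofScalars ℂ b) 0 1 ∧
    ∀ z ∈ Metric.ball (0:ℂ) 1,
      f z = (ofScalars ℂ a).sum z + (starRingEnd ℂ) ((ofScalars ℂ b).sum z) := by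
  -- coefficient bounds at every radius s < 1
  have hbound : ∀ s : ℝ, 0 < s → s < 1 →
      ∃ C : ℝ, ∀ n : ℕ, (‖a n‖ + ‖b n‖) * s ^ n ≤ C := by
    intro s hs0 hs1
    apply coeff_bound_of_bddterms a b s hs0 hs1
    intro θ
    have hz : (s:ℂ) * Complex.exp (θ * I) ∈ Metric.ball (0:ℂ) 1 := by
      rw [Metric.mem_ball, dist_zero_right, norm_mul,
        Complex.norm_exp_ofReal_mul_I, Complex.norm_real, Real.norm_eq_abs, mul_one, abs_of_pos hs0]
      exact hs1
    have hsummable := (hrep _ hz).summable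
    have htend := hsummable.tendsto_atTop_zero
    have hbdd := (htend.norm).bddAbove_range
    obtain ⟨M, hM⟩ := hbdd
    exact ⟨M, fun n => hM (Set.mem_range_self n)⟩
  have hrad : ∀ c : ℕ → ℂ, (∀ n, ‖c n‖ ≤ ‖a n‖ + ‖b n‖) →
      1 ≤ (ofScalars ℂ c).radius := by
    intro c hc
    apply ENNReal.le_of_forall_nnreal_lt
    intro r hr
    rcases eq_or_lt_of_le (show (0:NNReal) ≤ r from zero_le) with h0 | h0
    · rw [← h0]; exact zero_le
    · have hr1 : (r:ℝ) < 1 := by exact_mod_cast hr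
      obtain ⟨C, hC⟩ := hbound r h0 hr1
      apply FormalMultilinearSeries.le_radius_of_bound _ C
      intro n
      rw [FormalMultilinearSeries.ofScalars_norm]
      calc ‖c n‖ * (r:ℝ) ^ n ≤ (‖a n‖ + ‖b n‖) * (r:ℝ) ^ n := by
            exact mul_le_mul_of_nonneg_right (hc n) (by positivity)
        _ ≤ C := hC n
  have hrada : 1 ≤ (ofScalars ℂ a).radius :=
    hrad a fun n => le_add_of_nonneg_right (norm_nonneg _)
  have hradb : 1 ≤ (ofScalars ℂ b).radius :=
    hrad b fun n => le_add_of_nonneg_left (norm_nonneg _)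
  have hga : HasFPowerSeriesOnBall (ofScalars ℂ a).sum (ofScalars ℂ a) 0 1 :=
    ((ofScalars ℂ a).hasFPowerSeriesOnBall (lt_of_lt_of_le one_pos hrada)).mono one_pos hrada
  have hgb : HasFPowerSeriesOnBall (ofScalars ℂ b).sum (ofScalars ℂ b) 0 1 :=
    ((ofScalars ℂ b).hasFPowerSeriesOnBall (lt_of_lt_of_le one_pos hradb)).mono one_pos hradb
  refine ⟨hga, hgb, fun z hz => ?_⟩
  have hze : z ∈ Metric.eball (0:ℂ) 1 := by
    rw [mem_emetric_ball_zero_iff]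
    rw [Metric.mem_ball, dist_zero_right] at hz
    simpa [enorm, ← NNReal.coe_lt_coe] using hz
  have hsa := hga.hasSum hze
  have hsb := hgb.hasSum hze
  rw [zero_add] at hsa hsb
  simp only [FormalMultilinearSeries.ofScalars_apply_eq, smul_eq_mul] at hsa hsb
  have hsb'' : HasSum (fun n => (starRingEnd ℂ) (b n) * ((starRingEnd ℂ) z) ^ n)
      ((starRingEnd ℂ) ((ofScalars ℂ b).sum z)) := by
    simpa only [starRingEnd_apply, star_mul', star_pow] using hsb.star
  exact ((hrep z hz).unique (hsa.add hsb''))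

lemma wirtinger_eq (g H f : ℂ → ℂ)
    (hg : AnalyticOnNhd ℂ g (Metric.ball 0 1)) (hH : AnalyticOnNhd ℂ H (Metric.ball 0 1))
    (hfeq : ∀ w ∈ Metric.ball (0:ℂ) 1, f w = g w + (starRingEnd ℂ) (H w))
    (z : ℂ) (hz : z ∈ Metric.ball (0:ℂ) 1) :
    wdz f z = deriv g z ∧ wdzbar f z = (starRingEnd ℂ) (deriv H z) := by
  have hgd : HasDerivAt g (deriv g z) z := ((hg z hz).differentiableAt).hasDerivAt
  have hHd : HasDerivAt H (deriv H z) z := ((hH z hz).differentiableAt).hasDerivAt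
  have hA : HasFDerivAt g ((deriv g z) • (1 : ℂ →L[ℝ] ℂ)) z := hgd.complexToReal_fderiv
  have hB0 : HasFDerivAt H ((deriv H z) • (1 : ℂ →L[ℝ] ℂ)) z := hHd.complexToReal_fderiv
  have hB : HasFDerivAt (fun w => (starRingEnd ℂ) (H w))
      ((Complex.conjCLE.toContinuousLinearMap).comp ((deriv H z) • (1 : ℂ →L[ℝ] ℂ))) z := by
    have := (Complex.conjCLE.hasFDerivAt (x := H z)).comp z hB0
    exact this
  have hsum : HasFDerivAt f
      (((deriv g z) • (1 : ℂ →L[ℝ] ℂ)) +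
        (Complex.conjCLE.toContinuousLinearMap).comp ((deriv H z) • (1 : ℂ →L[ℝ] ℂ))) z := by
    refine (hA.add hB).congr_of_eventuallyEq ?_
    filter_upwards [Metric.isOpen_ball.mem_nhds hz] with w hw using (hfeq w hw)
  have hfd := hsum.fderiv
  have h1 : fderiv ℝ f z 1 = deriv g z + (starRingEnd ℂ) (deriv H z) := by
    rw [hfd]
    simp [Complex.conjCLE_apply]
  have hI : fderiv ℝ f z Complex.I
      = deriv g z * Complex.I + (starRingEnd ℂ) (deriv H z) * (-Complex.I) := by
    rw [hfd]
    simp [Complex.conjCLE_apply, Complex.conj_I, smul_eq_mul]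
    try ring
  constructor
  · rw [wdz, h1, hI]
    linear_combination (((starRingEnd ℂ) (deriv H z)) - deriv g z)/2 * Complex.I_sq
  · rw [wdzbar, h1, hI]
    linear_combination ((deriv g z) - ((starRingEnd ℂ) (deriv H z)))/2 * Complex.I_sq

open FormalMultilinearSeries in
lemma cauchy_coeff_bound (c : ℕ → ℂ) (G : ℂ → ℂ)
    (hG : HasFPowerSeriesOnBall G (ofScalars ℂ c) 0 1)
    (ρ : ℝ) (hρ0 : 0 < ρ) (hρ1 : ρ < 1) (m : ℕ) :
    ((m:ℝ)+1) * ‖c (m+1)‖ * ρ ^ m ≤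
      (2*Real.pi)⁻¹ * ∫ θ in (0:ℝ)..2*Real.pi, ‖deriv G (circleMap 0 ρ θ)‖ := by
  have hAn : AnalyticOnNhd ℂ G (Metric.ball 0 1) := by
    intro z hz
    refine hG.analyticOnNhd z ?_
    rw [mem_emetric_ball_zero_iff]
    rw [Metric.mem_ball, dist_zero_right] at hz
    simpa [enorm, ← NNReal.coe_lt_coe] using hz
  have hdG : AnalyticOnNhd ℂ (deriv G) (Metric.ball 0 1) := hAn.deriv
  have hdiff : DifferentiableOn ℂ (deriv G) (Metric.closedBall 0 ρ) :=
    (hdG.mono (Metric.closedBall_subset_ball hρ1)).differentiableOn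
  set ρnn : NNReal := ⟨ρ, hρ0.le⟩ with hρnn
  have hcoe : ((ρnn : ℝ)) = ρ := rfl
  have hcps : HasFPowerSeriesOnBall (deriv G) (cauchyPowerSeries (deriv G) 0 ρ) 0 ρnn := by
    have := DifferentiableOn.hasFPowerSeriesOnBall (R := ρnn) (by rw [hcoe]; exact hdiff)
      (NNReal.coe_pos.mp hρ0)
    simpa [hcoe] using this
  set q := cauchyPowerSeries (deriv G) 0 ρ with hq
  -- coefficient identity
  have hfact1 := hcps.factorial_smul 1 m
  have hfact2 := hG.factorial_smul 1 (m+1)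
  have hiter : iteratedFDeriv ℂ m (deriv G) 0 (fun _ => 1)
      = iteratedFDeriv ℂ (m+1) G 0 (fun _ => 1) := by
    rw [← iteratedDeriv_eq_iteratedFDeriv, ← iteratedDeriv_eq_iteratedFDeriv,
      iteratedDeriv_succ']
  have hofs : (ofScalars ℂ c (m+1)) (fun _ => (1:ℂ)) = c (m+1) := by
    rw [FormalMultilinearSeries.ofScalars_apply_eq]
    simp
  have hkey : (q m fun _ => (1:ℂ)) = ((m:ℂ)+1) * c (m+1) := by
    have h1 : (m.factorial : ℂ) * (q m fun _ => (1:ℂ))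
        = ((m+1).factorial : ℂ) * c (m+1) := by
      have e1 := hfact1
      have e2 := hfact2
      rw [hiter, ← e2, hofs] at e1
      simpa only [nsmul_eq_mul] using e1
    have hne : (m.factorial : ℂ) ≠ 0 := by exact_mod_cast m.factorial_ne_zero
    have h2 : ((m+1).factorial : ℂ) = ((m:ℂ)+1) * (m.factorial : ℂ) := by
      rw [Nat.factorial_succ]; push_cast; ring
    rw [h2, show ((m:ℂ)+1) * (m.factorial:ℂ) * c (m+1)
      = (m.factorial:ℂ) * (((m:ℂ)+1) * c (m+1)) by ring] at h1
    exact mul_left_cancel₀ hne h1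
  -- norm bound
  have hnorm1 : ‖q m fun _ => (1:ℂ)‖ ≤ ‖q m‖ := by
    have := (q m).le_opNorm (fun _ => (1:ℂ))
    simpa using this
  have hnorm2 := norm_cauchyPowerSeries_le (deriv G) 0 ρ m
  have habs : ‖q m fun _ => (1:ℂ)‖ = ((m:ℝ)+1) * ‖c (m+1)‖ := by
    rw [hkey, norm_mul]
    congr 1
    rw [show ((m:ℂ)+1) = ((m+1:ℕ):ℂ) by push_cast; ring]
    rw [Complex.norm_natCast]
    push_cast; ring
  have hint : 0 ≤ (2*Real.pi)⁻¹ * ∫ θ in (0:ℝ)..2*Real.pi,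
      ‖deriv G (circleMap 0 ρ θ)‖ := by
    apply mul_nonneg (by positivity)
    apply intervalIntegral.integral_nonneg Real.two_pi_pos.le
    intro θ _
    positivity
  have hρabs : |ρ| = ρ := abs_of_pos hρ0
  have hchain : ((m:ℝ)+1) * ‖c (m+1)‖ ≤
      ((2*Real.pi)⁻¹ * ∫ θ in (0:ℝ)..2*Real.pi,
        ‖deriv G (circleMap 0 ρ θ)‖) * (ρ⁻¹) ^ m := by
    have h2' := hnorm2
    rw [hρabs] at h2'
    rw [← habs]
    exact hnorm1.trans h2'
  calc ((m:ℝ)+1) * ‖c (m+1)‖ * ρ ^ m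
      ≤ ((2*Real.pi)⁻¹ * ∫ θ in (0:ℝ)..2*Real.pi,
        ‖deriv G (circleMap 0 ρ θ)‖) * (ρ⁻¹) ^ m * ρ ^ m := by
        exact mul_le_mul_of_nonneg_right hchain (by positivity)
    _ = (2*Real.pi)⁻¹ * ∫ θ in (0:ℝ)..2*Real.pi,
        ‖deriv G (circleMap 0 ρ θ)‖ := by
        rw [mul_assoc, ← mul_pow, inv_mul_cancel₀ hρ0.ne', one_pow, mul_one]

lemma abs_abs_sub_abs_le_qc (u v w : ℂ) (hw : ‖w‖ = 1) :
    |‖u‖ - ‖v‖| ≤ ‖u + w * v‖ := by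
  rw [abs_sub_le_iff]
  constructor
  · have h1 : ‖u‖ ≤ ‖u + w*v‖ + ‖w*v‖ := by
      calc ‖u‖ = ‖(u + w*v) + (-(w*v))‖ := by ring_nf
        _ ≤ ‖u + w*v‖ + ‖-(w*v)‖ := norm_add_le _ _
        _ = ‖u + w*v‖ + ‖w*v‖ := by rw [norm_neg]
    rw [norm_mul, hw, one_mul] at h1
    linarith
  · have h1 : ‖v‖ = ‖w*v‖ := by rw [norm_mul, hw, one_mul]
    have h2 : ‖w*v‖ ≤ ‖u + w*v‖ + ‖u‖ := by
      calc ‖w*v‖ = ‖(u + w*v) + (-u)‖ := by ring_nf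
        _ ≤ ‖u + w*v‖ + ‖-u‖ := norm_add_le _ _
        _ = ‖u + w*v‖ + ‖u‖ := by rw [norm_neg]
    linarith

lemma analyticOnNhd_of_fps {G : ℂ → ℂ} {p : FormalMultilinearSeries ℂ ℂ ℂ}
    (hG : HasFPowerSeriesOnBall G p 0 1) : AnalyticOnNhd ℂ G (Metric.ball 0 1) := by
  intro z hz
  refine hG.analyticOnNhd z ?_
  rw [mem_emetric_ball_zero_iff]
  rw [Metric.mem_ball, dist_zero_right] at hz
  simpa [enorm, ← NNReal.coe_lt_coe] using hz

lemma mem_ball_circle {ρ : ℝ} (θ : ℝ) (hρ : |ρ| < 1) :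
    (↑ρ * Complex.exp (↑θ * Complex.I)) ∈ Metric.ball (0:ℂ) 1 := by
  rw [Metric.mem_ball, dist_zero_right, norm_mul,
    Complex.norm_exp_ofReal_mul_I, Complex.norm_real, Real.norm_eq_abs, mul_one]
  exact hρ
lemma qc_pointwise (K K' x y : ℝ) (hK' : 0 ≤ K') (hx : 0 ≤ x) (hy : 0 ≤ y)
    (hK : 0 ≤ K)
    (h : (x + y) ^ 2 ≤ K * (x ^ 2 - y ^ 2) + K') :
    x + y ≤ K * |x - y| + Real.sqrt K' := by
  have hs0 : 0 ≤ x + y := by positivity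
  have hD0 : 0 ≤ |x - y| := abs_nonneg _
  have key : K * ((x+y) * (x - y)) ≤ K * ((x+y) * |x - y|) :=
    mul_le_mul_of_nonneg_left (mul_le_mul_of_nonneg_left (le_abs_self _) hs0) hK
  have h1 : (x+y)^2 ≤ K * (x+y) * |x - y| + K' := by nlinarith [key]
  by_cases hcase : x + y ≤ K * |x - y|
  · linarith [Real.sqrt_nonneg K']
  · push_neg at hcase
    have h3 : (x + y - K * |x - y|) ^ 2 ≤ K' := by
      nlinarith [mul_nonneg hK hD0]
    have := (Real.le_sqrt (by linarith) hK').mpr h3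
    linarith
open MeasureTheory in
open FormalMultilinearSeries in
lemma main_estimate (f : ℂ → ℂ) (a b : ℕ → ℂ) (K K' L : ℝ)
    (hK : 1 ≤ K) (hK' : 0 ≤ K') (hL : 0 ≤ L)
    (hqc : ∀ z ∈ Metric.ball (0:ℂ) 1,
      (‖wdz f z‖ + ‖wdzbar f z‖) ^ 2
        ≤ K * ((‖wdz f z‖) ^ 2 - (‖wdzbar f z‖) ^ 2) + K')
    (hrad : ∀ θ : ℝ, ∀ r ∈ Set.Ico (0:ℝ) 1,
      ∫ ρ in (0:ℝ)..r,
        ‖wdz f (ρ * Complex.exp (θ * Complex.I))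
          + Complex.exp (-2 * θ * Complex.I) * wdzbar f (ρ * Complex.exp (θ * Complex.I))‖
      ≤ L)
    (hga : HasFPowerSeriesOnBall (ofScalars ℂ a).sum (ofScalars ℂ a) 0 1)
    (hgb : HasFPowerSeriesOnBall (ofScalars ℂ b).sum (ofScalars ℂ b) 0 1)
    (hfeq : ∀ z ∈ Metric.ball (0:ℂ) 1,
      f z = (ofScalars ℂ a).sum z + (starRingEnd ℂ) ((ofScalars ℂ b).sum z))
    (m : ℕ) (r : ℝ) (hr0 : 0 < r) (hr1 : r < 1) :
    (‖a (m+1)‖ + ‖b (m+1)‖) * r ^ (m+1)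
      ≤ Real.sqrt K' + K * L := by
  have hπ : (0:ℝ) < Real.pi := Real.pi_pos
  have h0r : (0:ℝ) ≤ r := hr0.le
  have h02π : (0:ℝ) ≤ 2*Real.pi := by positivity
  have hK0 : (0:ℝ) ≤ K := le_trans zero_le_one hK
  set g : ℂ → ℂ := (ofScalars ℂ a).sum with hgdef
  set Hs : ℂ → ℂ := (ofScalars ℂ b).sum with hHdef
  have hg_an : AnalyticOnNhd ℂ g (Metric.ball 0 1) := analyticOnNhd_of_fps hga
  have hH_an : AnalyticOnNhd ℂ Hs (Metric.ball 0 1) := analyticOnNhd_of_fps hgb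
  have hdg_an : AnalyticOnNhd ℂ (deriv g) (Metric.ball 0 1) := hg_an.deriv
  have hdH_an : AnalyticOnNhd ℂ (deriv Hs) (Metric.ball 0 1) := hH_an.deriv
  have hw : ∀ z ∈ Metric.ball (0:ℂ) 1,
      wdz f z = deriv g z ∧ wdzbar f z = (starRingEnd ℂ) (deriv Hs z) :=
    fun z hz => wirtinger_eq g Hs f hg_an hH_an hfeq z hz
  set F : ℝ → ℝ → ℝ := fun ρ θ =>
    ‖deriv g (↑ρ * Complex.exp (↑θ * Complex.I))‖
      + ‖deriv Hs (↑ρ * Complex.exp (↑θ * Complex.I))‖ with hF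
  -- continuity of the path map
  have hpath : Continuous (fun q : ℝ × ℝ => ((q.1 : ℂ) * Complex.exp ((q.2 : ℂ) * Complex.I))) :=
    (Complex.continuous_ofReal.comp continuous_fst).mul
      (Complex.continuous_exp.comp
        ((Complex.continuous_ofReal.comp continuous_snd).mul continuous_const))
  have hcontF : ∀ ρ θ : ℝ, |ρ| < 1 →
      ContinuousAt (Function.uncurry F) (ρ, θ) := by
    intro ρ θ hρ
    have hmem := mem_ball_circle (ρ := ρ) θ hρ
    have h1 := ContinuousAt.comp (x := (ρ, θ)) ((hdg_an _ hmem).continuousAt)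
      hpath.continuousAt
    have h2 := ContinuousAt.comp (x := (ρ, θ)) ((hdH_an _ hmem).continuousAt)
      hpath.continuousAt
    exact (continuous_norm.continuousAt.comp h1).add
      (continuous_norm.continuousAt.comp h2)
  -- product integrability
  set μ := MeasureTheory.volume.restrict (Set.Ioc (0:ℝ) r) with hμ
  set ν := MeasureTheory.volume.restrict (Set.Ioc (0:ℝ) (2*Real.pi)) with hν
  have hprodInt : MeasureTheory.Integrable (Function.uncurry F) (μ.prod ν) := by
    rw [hμ, hν, MeasureTheory.Measure.prod_restrict, ← MeasureTheory.Measure.volume_eq_prod]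
    have hcpt : IsCompact (Set.Icc (0:ℝ) r ×ˢ Set.Icc (0:ℝ) (2*Real.pi)) :=
      isCompact_Icc.prod isCompact_Icc
    have hcon : ContinuousOn (Function.uncurry F)
        (Set.Icc (0:ℝ) r ×ˢ Set.Icc (0:ℝ) (2*Real.pi)) := by
      intro q hq
      obtain ⟨hq1, _⟩ := hq
      have : |q.1| < 1 := by
        rw [_root_.abs_of_nonneg hq1.1]; exact lt_of_le_of_lt hq1.2 hr1
      exact (hcontF q.1 q.2 this).continuousWithinAt
    exact (hcon.integrableOn_compact hcpt).mono_set
      (Set.prod_mono Set.Ioc_subset_Icc_self Set.Ioc_subset_Icc_self)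
  -- coefficient bound pointwise in ρ
  have hcoeffρ : ∀ ρ ∈ Set.Ioc (0:ℝ) r, ((m:ℝ)+1) * (‖a (m+1)‖ + ‖b (m+1)‖) * ρ^m
      ≤ (2*Real.pi)⁻¹ * ∫ θ in (0:ℝ)..2*Real.pi, F ρ θ := by
    intro ρ hρ
    have hρ0 : 0 < ρ := hρ.1
    have hρ1 : ρ < 1 := lt_of_le_of_lt hρ.2 hr1
    have h1 := cauchy_coeff_bound a g hga ρ hρ0 hρ1 m
    have h2 := cauchy_coeff_bound b Hs hgb ρ hρ0 hρ1 m
    have hcm : ∀ θ:ℝ, circleMap 0 ρ θ = ↑ρ * Complex.exp (↑θ*Complex.I) := by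
      intro θ; simp [circleMap]
    simp only [hcm] at h1 h2
    have hpathθ : Continuous fun θ:ℝ => ((ρ:ℂ) * Complex.exp ((θ:ℂ)*Complex.I)) :=
      continuous_const.mul (Complex.continuous_exp.comp
        (Complex.continuous_ofReal.mul continuous_const))
    have hmemθ : ∀ θ:ℝ, ((ρ:ℂ) * Complex.exp ((θ:ℂ)*Complex.I)) ∈ Metric.ball (0:ℂ) 1 :=
      fun θ => mem_ball_circle θ (by rwa [abs_of_pos hρ0])
    have hcg : Continuous (fun θ:ℝ =>
        ‖deriv g ((ρ:ℂ) * Complex.exp ((θ:ℂ)*Complex.I))‖) := by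
      rw [continuous_iff_continuousAt]; intro θ
      have h1 := ContinuousAt.comp (x := θ) ((hdg_an _ (hmemθ θ)).continuousAt)
        hpathθ.continuousAt
      exact continuous_norm.continuousAt.comp h1
    have hcH : Continuous (fun θ:ℝ =>
        ‖deriv Hs ((ρ:ℂ) * Complex.exp ((θ:ℂ)*Complex.I))‖) := by
      rw [continuous_iff_continuousAt]; intro θ
      have h1 := ContinuousAt.comp (x := θ) ((hdH_an _ (hmemθ θ)).continuousAt)
        hpathθ.continuousAt
      exact continuous_norm.continuousAt.comp h1
    have hIeq : ∫ θ in (0:ℝ)..2*Real.pi, F ρ θ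
        = (∫ θ in (0:ℝ)..2*Real.pi,
            ‖deriv g ((ρ:ℂ) * Complex.exp ((θ:ℂ)*Complex.I))‖)
          + ∫ θ in (0:ℝ)..2*Real.pi,
            ‖deriv Hs ((ρ:ℂ) * Complex.exp ((θ:ℂ)*Complex.I))‖ := by
      rw [← intervalIntegral.integral_add (hcg.intervalIntegrable _ _)
        (hcH.intervalIntegrable _ _)]
    rw [hIeq]
    calc ((m:ℝ)+1) * (‖a (m+1)‖ + ‖b (m+1)‖) * ρ^m
        = ((m:ℝ)+1) * ‖a (m+1)‖ * ρ^m
          + ((m:ℝ)+1) * ‖b (m+1)‖ * ρ^m := by ring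
      _ ≤ ((2*Real.pi)⁻¹ * ∫ θ in (0:ℝ)..2*Real.pi,
            ‖deriv g ((ρ:ℂ) * Complex.exp ((θ:ℂ)*Complex.I))‖)
          + (2*Real.pi)⁻¹ * ∫ θ in (0:ℝ)..2*Real.pi,
            ‖deriv Hs ((ρ:ℂ) * Complex.exp ((θ:ℂ)*Complex.I))‖ :=
        add_le_add h1 h2
      _ = (2*Real.pi)⁻¹ * ((∫ θ in (0:ℝ)..2*Real.pi,
            ‖deriv g ((ρ:ℂ) * Complex.exp ((θ:ℂ)*Complex.I))‖)
          + ∫ θ in (0:ℝ)..2*Real.pi,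
            ‖deriv Hs ((ρ:ℂ) * Complex.exp ((θ:ℂ)*Complex.I))‖) := by ring
  -- radial bound pointwise in θ
  have hradial : ∀ θ:ℝ, ∫ ρ in (0:ℝ)..r, F ρ θ ≤ Real.sqrt K' + K * L := by
    intro θ
    set w : ℂ := Complex.exp (-2 * (θ:ℂ) * Complex.I) with hwdef
    have hwabs : ‖w‖ = 1 := by
      rw [hwdef, show (-2 * (θ:ℂ) * Complex.I) = ((-2*θ:ℝ):ℂ) * Complex.I by push_cast; ring]
      exact Complex.norm_exp_ofReal_mul_I _
    have hmemρ : ∀ ρ ∈ Set.Icc (0:ℝ) r,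
        ((ρ:ℂ) * Complex.exp ((θ:ℂ)*Complex.I)) ∈ Metric.ball (0:ℂ) 1 := by
      intro ρ hρ
      exact mem_ball_circle θ (by rw [_root_.abs_of_nonneg hρ.1]; exact lt_of_le_of_lt hρ.2 hr1)
    have hpt : ∀ ρ ∈ Set.Icc (0:ℝ) r, F ρ θ
        ≤ Real.sqrt K' + K * ‖deriv g ((ρ:ℂ) * Complex.exp ((θ:ℂ)*Complex.I))
            + w * (starRingEnd ℂ) (deriv Hs ((ρ:ℂ) * Complex.exp ((θ:ℂ)*Complex.I)))‖ := by
      intro ρ hρ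
      set z := ((ρ:ℂ) * Complex.exp ((θ:ℂ)*Complex.I)) with hz
      have hmem := hmemρ ρ hρ
      obtain ⟨hw1, hw2⟩ := hw z hmem
      have hq := hqc z hmem
      rw [hw1, hw2, Complex.norm_conj] at hq
      have hqc2 := qc_pointwise K K' (‖deriv g z‖) (‖deriv Hs z‖)
        hK' (norm_nonneg _) (norm_nonneg _) hK0 hq
      have hD := abs_abs_sub_abs_le_qc (deriv g z) ((starRingEnd ℂ) (deriv Hs z)) w hwabs
      rw [Complex.norm_conj] at hD
      have hKD : K * |‖deriv g z‖ - ‖deriv Hs z‖|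
          ≤ K * ‖deriv g z + w * (starRingEnd ℂ) (deriv Hs z)‖ :=
        mul_le_mul_of_nonneg_left hD hK0
      show ‖deriv g z‖ + ‖deriv Hs z‖ ≤ _
      linarith
    -- integrability on [0,r]
    have hcontρg : ContinuousOn (fun ρ:ℝ => F ρ θ) (Set.Icc 0 r) := by
      intro ρ hρ
      have : |ρ| < 1 := by rw [_root_.abs_of_nonneg hρ.1]; exact lt_of_le_of_lt hρ.2 hr1
      have := (hcontF ρ θ this).comp (f := fun ρ:ℝ => ((ρ:ℝ), θ))
        (continuous_id.prodMk continuous_const).continuousAt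
      exact this.continuousWithinAt
    have hAcont : ContinuousOn (fun ρ:ℝ =>
        ‖deriv g ((ρ:ℂ) * Complex.exp ((θ:ℂ)*Complex.I))
          + w * (starRingEnd ℂ) (deriv Hs ((ρ:ℂ) * Complex.exp ((θ:ℂ)*Complex.I)))‖)
        (Set.Icc 0 r) := by
      intro ρ hρ
      have hmem := hmemρ ρ hρ
      have hpathρ : Continuous fun ρ:ℝ => ((ρ:ℂ) * Complex.exp ((θ:ℂ)*Complex.I)) :=
        (Complex.continuous_ofReal.mul continuous_const)
      have h1 := ContinuousAt.comp (x := ρ) ((hdg_an _ hmem).continuousAt)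
        hpathρ.continuousAt
      have h2 := Complex.continuous_conj.continuousAt.comp
          (ContinuousAt.comp (x := ρ) ((hdH_an _ hmem).continuousAt) hpathρ.continuousAt)
      exact (continuous_norm.continuousAt.comp
        (h1.add (continuousAt_const.mul h2))).continuousWithinAt
    have hint1 : IntervalIntegrable (fun ρ:ℝ => F ρ θ) MeasureTheory.volume 0 r := by
      apply ContinuousOn.intervalIntegrable
      rwa [Set.uIcc_of_le h0r]
    have hintA : IntervalIntegrable (fun ρ:ℝ =>
        ‖deriv g ((ρ:ℂ) * Complex.exp ((θ:ℂ)*Complex.I))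
          + w * (starRingEnd ℂ) (deriv Hs ((ρ:ℂ) * Complex.exp ((θ:ℂ)*Complex.I)))‖)
        MeasureTheory.volume 0 r := by
      apply ContinuousOn.intervalIntegrable
      rwa [Set.uIcc_of_le h0r]
    have hint2 : IntervalIntegrable (fun ρ:ℝ => Real.sqrt K'
        + K * ‖deriv g ((ρ:ℂ) * Complex.exp ((θ:ℂ)*Complex.I))
          + w * (starRingEnd ℂ) (deriv Hs ((ρ:ℂ) * Complex.exp ((θ:ℂ)*Complex.I)))‖) MeasureTheory.volume 0 r := by
      -- careful with precedence: K * abs (...) ; the above parse?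
      exact intervalIntegrable_const.add (hintA.const_mul K)
    have hstep := intervalIntegral.integral_mono_on h0r hint1 hint2 hpt
    have hcongr : ∫ ρ in (0:ℝ)..r,
        ‖deriv g ((ρ:ℂ) * Complex.exp ((θ:ℂ)*Complex.I))
          + w * (starRingEnd ℂ) (deriv Hs ((ρ:ℂ) * Complex.exp ((θ:ℂ)*Complex.I)))‖
        = ∫ ρ in (0:ℝ)..r,
        ‖wdz f ((ρ:ℂ) * Complex.exp ((θ:ℂ)*Complex.I))
          + Complex.exp (-2 * (θ:ℂ) * Complex.I) * wdzbar f ((ρ:ℂ) * Complex.exp ((θ:ℂ)*Complex.I))‖ := by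
      apply intervalIntegral.integral_congr
      intro ρ hρ
      rw [Set.uIcc_of_le h0r] at hρ
      obtain ⟨hw1, hw2⟩ := hw _ (hmemρ ρ hρ)
      simp only [hw1, hw2, hwdef]
    have hradL := hrad θ r ⟨h0r, hr1⟩
    have hconst : ∫ ρ in (0:ℝ)..r, (Real.sqrt K'
        + K * ‖deriv g ((ρ:ℂ) * Complex.exp ((θ:ℂ)*Complex.I))
          + w * (starRingEnd ℂ) (deriv Hs ((ρ:ℂ) * Complex.exp ((θ:ℂ)*Complex.I)))‖)
        = Real.sqrt K' * r + K * ∫ ρ in (0:ℝ)..r,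
            ‖deriv g ((ρ:ℂ) * Complex.exp ((θ:ℂ)*Complex.I))
          + w * (starRingEnd ℂ) (deriv Hs ((ρ:ℂ) * Complex.exp ((θ:ℂ)*Complex.I)))‖ := by
      rw [intervalIntegral.integral_add intervalIntegrable_const (hintA.const_mul K),
        intervalIntegral.integral_const, intervalIntegral.integral_const_mul]
      simp [smul_eq_mul]
      ring
    rw [hconst, hcongr] at hstep
    have hsqrt : Real.sqrt K' * r ≤ Real.sqrt K' := by
      nlinarith [Real.sqrt_nonneg K']
    have hKL : K * (∫ ρ in (0:ℝ)..r,
        ‖wdz f ((ρ:ℂ) * Complex.exp ((θ:ℂ)*Complex.I))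
          + Complex.exp (-2 * (θ:ℂ) * Complex.I) * wdzbar f ((ρ:ℂ) * Complex.exp ((θ:ℂ)*Complex.I))‖)
        ≤ K * L := mul_le_mul_of_nonneg_left hradL hK0
    linarith
  -- assemble via Fubini
  have hLHSint : IntervalIntegrable (fun ρ:ℝ => ((m:ℝ)+1) * (‖a (m+1)‖ + ‖b (m+1)‖) * ρ^m)
      MeasureTheory.volume 0 r :=
    (Continuous.intervalIntegrable (continuous_const.mul (continuous_pow m))) _ _
  have hΦeq : (fun ρ:ℝ => ∫ θ, Function.uncurry F (ρ, θ) ∂ν)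
      = (fun ρ:ℝ => ∫ θ in (0:ℝ)..2*Real.pi, F ρ θ) := by
    funext ρ
    rw [intervalIntegral.integral_of_le h02π]
    rfl
  have hΦint0 : MeasureTheory.Integrable
      (fun ρ:ℝ => ∫ θ in (0:ℝ)..2*Real.pi, F ρ θ) μ := by
    rw [← hΦeq]
    exact hprodInt.integral_prod_left
  have hΦint : IntervalIntegrable
      (fun ρ:ℝ => (2*Real.pi)⁻¹ * ∫ θ in (0:ℝ)..2*Real.pi, F ρ θ)
      MeasureTheory.volume 0 r := by
    rw [intervalIntegrable_iff, Set.uIoc_of_le h0r]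
    exact (hΦint0.const_mul _)
  have hae : (fun ρ:ℝ => ((m:ℝ)+1) * (‖a (m+1)‖ + ‖b (m+1)‖) * ρ^m)
      ≤ᵐ[MeasureTheory.volume.restrict (Set.Icc (0:ℝ) r)]
      (fun ρ:ℝ => (2*Real.pi)⁻¹ * ∫ θ in (0:ℝ)..2*Real.pi, F ρ θ) := by
    have h0 : ∀ᵐ ρ:ℝ ∂MeasureTheory.volume, ρ ≠ 0 := by
      rw [MeasureTheory.ae_iff]
      simpa using Real.volume_singleton (a := 0)
    filter_upwards [MeasureTheory.ae_restrict_mem measurableSet_Icc,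
      MeasureTheory.ae_restrict_of_ae h0] with ρ hρ hρ0
    exact hcoeffρ ρ ⟨lt_of_le_of_ne hρ.1 (Ne.symm hρ0), hρ.2⟩
  have hmono := intervalIntegral.integral_mono_ae_restrict h0r hLHSint hΦint hae
  have hLHSval : ∫ ρ in (0:ℝ)..r, ((m:ℝ)+1) * (‖a (m+1)‖ + ‖b (m+1)‖) * ρ^m = (‖a (m+1)‖ + ‖b (m+1)‖) * r^(m+1) := by
    rw [intervalIntegral.integral_const_mul, integral_pow]
    have : ((m:ℝ)+1) ≠ 0 := by positivity
    field_simp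
    ring
  have hswap : ∫ ρ in (0:ℝ)..r, ((2*Real.pi)⁻¹ * ∫ θ in (0:ℝ)..2*Real.pi, F ρ θ)
      = (2*Real.pi)⁻¹ * ∫ θ in (0:ℝ)..2*Real.pi, (∫ ρ in (0:ℝ)..r, F ρ θ) := by
    rw [intervalIntegral.integral_const_mul]
    congr 1
    rw [intervalIntegral.integral_of_le h0r, intervalIntegral.integral_of_le h02π]
    simp only [intervalIntegral.integral_of_le h0r, intervalIntegral.integral_of_le h02π]
    exact MeasureTheory.integral_integral_swap hprodInt
  have hIntInner : IntervalIntegrable (fun θ:ℝ => ∫ ρ in (0:ℝ)..r, F ρ θ)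
      MeasureTheory.volume 0 (2*Real.pi) := by
    rw [intervalIntegrable_iff, Set.uIoc_of_le h02π]
    have := (hprodInt.swap).integral_prod_left
    have heq : (fun θ:ℝ => ∫ ρ, (Function.uncurry F ∘ Prod.swap) (θ, ρ) ∂μ)
        = (fun θ:ℝ => ∫ ρ in (0:ℝ)..r, F ρ θ) := by
      funext θ
      rw [intervalIntegral.integral_of_le h0r]
      rfl
    rwa [heq] at this
  have hθmono : ∫ θ in (0:ℝ)..2*Real.pi, (∫ ρ in (0:ℝ)..r, F ρ θ)
      ≤ ∫ θ in (0:ℝ)..2*Real.pi, (Real.sqrt K' + K * L) := by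
    apply intervalIntegral.integral_mono_on h02π hIntInner intervalIntegrable_const
    intro θ _
    exact hradial θ
  have hconstval : ∫ θ in (0:ℝ)..2*Real.pi, (Real.sqrt K' + K * L)
      = 2*Real.pi * (Real.sqrt K' + K * L) := by
    rw [intervalIntegral.integral_const]
    simp [smul_eq_mul]
  have hfinal : (‖a (m+1)‖ + ‖b (m+1)‖) * r^(m+1) ≤ (2*Real.pi)⁻¹ * (2*Real.pi * (Real.sqrt K' + K * L)) := by
    rw [← hLHSval]
    refine hmono.trans ?_
    rw [hswap]
    apply mul_le_mul_of_nonneg_left _ (by positivity)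
    rw [← hconstval]
    exact hθmono
  have : (2*Real.pi)⁻¹ * (2*Real.pi * (Real.sqrt K' + K * L))
      = Real.sqrt K' + K * L := by
    field_simp
  linarith [hfinal, this.symm.le]

/-- Coefficient estimate for harmonic (K,K')-quasiconformal mappings with finite
    radial length L = ℓ*_f(1): |aₙ| + |bₙ| ≤ √K' + K L. -/
theorem coeff_bound_radial_length (f : ℂ → ℂ) (a b : ℕ → ℂ) (K K' L : ℝ)
    (hK : 1 ≤ K) (hK' : 0 ≤ K') (hL : 0 ≤ L)
    (hreg : ContDiffOn ℝ 1 f (Metric.ball 0 1))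
    (hb0 : b 0 = 0)
    (hrep : ∀ z ∈ Metric.ball (0:ℂ) 1,
      HasSum (fun n : ℕ => a n * z ^ n + (starRingEnd ℂ) (b n) * ((starRingEnd ℂ) z) ^ n) (f z))
    (hinj : Set.InjOn f (Metric.ball 0 1))
    (hqc : ∀ z ∈ Metric.ball (0:ℂ) 1,
      (‖wdz f z‖ + ‖wdzbar f z‖) ^ 2
        ≤ K * ((‖wdz f z‖) ^ 2 - (‖wdzbar f z‖) ^ 2) + K')
    (hrad : ∀ θ : ℝ, ∀ r ∈ Set.Ico (0:ℝ) 1,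
      ∫ ρ in (0:ℝ)..r,
        ‖wdz f (ρ * Complex.exp (θ * Complex.I))
          + Complex.exp (-2 * θ * Complex.I) * wdzbar f (ρ * Complex.exp (θ * Complex.I))‖
      ≤ L) :
    ∀ n : ℕ, 1 ≤ n →
      ‖a n‖ + ‖b n‖ ≤ Real.sqrt K' + K * L := by
  intro n hn
  obtain ⟨hga, hgb, hfeq⟩ := series_setup a b f hrep
  obtain ⟨m, rfl⟩ : ∃ m, n = m + 1 := ⟨n-1, (Nat.succ_pred_eq_of_pos hn).symm⟩
  have key : ∀ r ∈ Set.Ioo (0:ℝ) 1,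
      (‖a (m+1)‖ + ‖b (m+1)‖) * r^(m+1)
        ≤ Real.sqrt K' + K * L :=
    fun r hr => main_estimate f a b K K' L hK hK' hL hqc hrad hga hgb hfeq m r hr.1 hr.2
  have htend : Filter.Tendsto
      (fun r : ℝ => (‖a (m+1)‖ + ‖b (m+1)‖) * r^(m+1))
      (nhdsWithin 1 (Set.Iio 1))
      (nhds ((‖a (m+1)‖ + ‖b (m+1)‖) * (1:ℝ)^(m+1))) :=
    ((continuous_const.mul (continuous_pow (m+1))).tendsto 1).mono_left nhdsWithin_le_nhds
  have hev : ∀ᶠ r in nhdsWithin (1:ℝ) (Set.Iio 1),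
      (‖a (m+1)‖ + ‖b (m+1)‖) * r^(m+1)
        ≤ Real.sqrt K' + K * L := by
    filter_upwards [Ioo_mem_nhdsLT_of_mem
      (show (1:ℝ) ∈ Set.Ioc (0:ℝ) 1 from ⟨one_pos, le_refl 1⟩)] with r hr
    exact key r hr
  have hle := le_of_tendsto htend hev
  simpa using hle
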